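/- Let V be an n×n complex matrix, k ∈ {2,…,n}, i ∈ {1,…,k−1}. Set α = {1,…,k−1} \ {i}, β = α′ \ {k} (where α′ is the complement of α in {1,…,n}), and β′ the complement of β. Then |e_β ∧ e_{β′}| · |(V^(n−k+1) e_{(k,…,n)}) ∧ e_{β′}| = V_{ik}, where V^(m) is the derivation extension of V to ⋀^m ℂ^n, e_γ = ⋀_{j∈γ} e_j in increasing order, and |h| is the coordinate of h ∈ ⋀^n ℂ^n relative to e_1 ∧ … ∧ e_n. -/

import Mathlib

open ExteriorAlgebra

/-- Family of alternating maps: the determinant in degree `n`, zero elsewhere. -/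
noncomputable def coordF (n : ℕ) : ∀ i, (Fin n → ℂ) [⋀^Fin i]→ₗ[ℂ] ℂ :=
  fun i => if h : i = n then Matrix.detRowAlternating.domDomCongr (finCongr h).symm else 0

/-- The coordinate functional w.r.t. `ω = e₁ ∧ ⋯ ∧ eₙ`. -/
noncomputable def coordMap (n : ℕ) : ExteriorAlgebra ℂ (Fin n → ℂ) →ₗ[ℂ] ℂ :=
  liftAlternating (coordF n)

lemma coordMap_prod (n : ℕ) (L : List (Fin n → ℂ)) (h : L.length = n) :
    coordMap n ((L.map (ι ℂ)).prod) =
      (Matrix.of fun i j => L.get (Fin.cast h.symm i) j).det := by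
  have h1 : (L.map (ι ℂ)).prod = ιMulti ℂ L.length L.get := by
    conv_lhs => rw [← List.ofFn_get L]
    rw [List.map_ofFn, ιMulti_apply]
    rfl
  rw [coordMap, h1, liftAlternating_apply_ιMulti, coordF]
  rw [dif_pos h]
  rfl

lemma det_updateRow_finsum {n : ℕ} (M : Matrix (Fin n) (Fin n) ℂ) (p : Fin n)
    {κ : Type*} (s : Finset κ) (v : κ → Fin n → ℂ) :
    (M.updateRow p (∑ i ∈ s, v i)).det = ∑ i ∈ s, (M.updateRow p (v i)).det := by
  classical
  induction s using Finset.induction with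
  | empty =>
      simp only [Finset.sum_empty]
      exact Matrix.det_eq_zero_of_row_eq_zero p (fun j => by simp)
  | insert _ _ h ih =>
      rw [Finset.sum_insert h, Finset.sum_insert h, Matrix.det_updateRow_add, ih]

lemma det_single_sq {n : ℕ} (g : Fin n → Fin n) (hg : Function.Injective g) :
    (Matrix.of fun i j => (Pi.single (g i) (1:ℂ) : Fin n → ℂ) j).det *
      (Matrix.of fun i j => (Pi.single (g i) (1:ℂ) : Fin n → ℂ) j).det = 1 := by
  set M : Matrix (Fin n) (Fin n) ℂ := Matrix.of fun i j => (Pi.single (g i) (1:ℂ) : Fin n → ℂ) j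
  have h1 : M * M.transpose = 1 := by
    ext i j
    simp only [Matrix.mul_apply, Matrix.transpose_apply, M, Matrix.of_apply, Pi.single_apply,
      Matrix.one_apply, ite_mul, one_mul, zero_mul]
    rw [Finset.sum_ite_eq' Finset.univ (g i)]
    simp [hg.eq_iff, eq_comm]
  calc M.det * M.det = M.det * M.transpose.det := by rw [Matrix.det_transpose]
    _ = (M * M.transpose).det := (Matrix.det_mul _ _).symm
    _ = 1 := by rw [h1, Matrix.det_one]

lemma det_eq_zero_of_get_eq {n : ℕ} (L : List (Fin n → ℂ)) (h : L.length = n)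
    (p q : ℕ) (hp : p < n) (hq : q < n) (hpq : p ≠ q)
    (hval : L[p]'(h.symm ▸ hp) = L[q]'(h.symm ▸ hq)) :
    (Matrix.of fun i j => L.get (Fin.cast h.symm i) j).det = 0 := by
  apply Matrix.det_zero_of_row_eq (i := (⟨p, hp⟩ : Fin n)) (j := ⟨q, hq⟩)
  · simp [Fin.ext_iff, hpq]
  · funext c
    simpa using congrFun hval c

/-- The wedge `e_{s₁} ∧ ⋯ ∧ e_{sₘ}` of standard basis vectors over the increasingly
sorted index set `s`. -/
noncomputable def stdWedge (n : ℕ) (s : Finset (Fin n)) : ExteriorAlgebra ℂ (Fin n → ℂ) :=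
  ((s.sort (· ≤ ·)).map fun j => ExteriorAlgebra.ι ℂ (Pi.single j (1 : ℂ))).prod

/-- The value `V^(m)(⋀_{j∈s} e_j)` of the derivation extension of a matrix `V` on the
wedge of the standard basis vectors indexed by `s`. -/
noncomputable def derivWedge (n : ℕ) (V : Matrix (Fin n) (Fin n) ℂ) (s : Finset (Fin n)) :
    ExteriorAlgebra ℂ (Fin n → ℂ) :=
  ∑ j ∈ s, ((s.sort (· ≤ ·)).map fun m =>
    ExteriorAlgebra.ι ℂ
      (if m = j then V.mulVec (Pi.single j (1 : ℂ)) else Pi.single m (1 : ℂ))).prod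

lemma coordMap_univ (n : ℕ) : coordMap n (stdWedge n Finset.univ) = 1 := by
  have hlen : ((Finset.univ.sort (· ≤ ·) : List (Fin n)).map
      fun j => (Pi.single j (1:ℂ) : Fin n → ℂ)).length = n := by
    simp
  rw [stdWedge]
  have hmm : ((Finset.univ.sort (· ≤ ·) : List (Fin n)).map
      fun j => ExteriorAlgebra.ι ℂ (Pi.single j (1 : ℂ))) =
      ((Finset.univ.sort (· ≤ ·) : List (Fin n)).map
        fun j => (Pi.single j (1:ℂ) : Fin n → ℂ)).map (ι ℂ) := by
    rw [List.map_map]; rfl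
  rw [hmm, coordMap_prod n _ hlen]
  have : (Matrix.of fun i j => (((Finset.univ.sort (· ≤ ·) : List (Fin n)).map
      fun j => (Pi.single j (1:ℂ) : Fin n → ℂ)).get (Fin.cast hlen.symm i)) j) =
      (1 : Matrix (Fin n) (Fin n) ℂ) := by
    ext i j
    simp only [Matrix.of_apply, List.get_eq_getElem, List.getElem_map,
      Matrix.one_apply, Pi.single_apply]
    have hval : ∀ (k : ℕ) (hk : k < (Finset.sort (Finset.univ : Finset (Fin n)) (fun x1 x2 : Fin n => x1 ≤ x2)).length),
        (Finset.sort (Finset.univ : Finset (Fin n)) (fun x1 x2 : Fin n => x1 ≤ x2))[k] = ⟨k, by simpa using hk⟩ := by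
      intro k hk
      rw [List.getElem_of_eq (Fin.sort_univ n)]
      simp [List.getElem_finRange, Fin.ext_iff]
    rw [hval]
    simp [Fin.ext_iff, eq_comm]
  rw [this, Matrix.det_one]

/-- `|e_β ∧ e_{β'}| ⬝ |(V^(n−k+1) e_{(k,…,n)}) ∧ e_{β'}| = V_{ik}` for
`i < k`, `α = {1,…,k−1} \ {i}`, `β = α' \ {k}` (here in 0-based indexing:
`I < K`, `α = [0, K) \ {I}`, `β = αᶜ \ {K}`, `e_{(k,…,n)}` is the wedge over `[K, n)`,
and `|h|` is the coordinate of `h` with respect to `ω = e₁ ∧ ⋯ ∧ eₙ`). -/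
theorem deriv_wedge_coordinate_entry_low (n : ℕ) (V : Matrix (Fin n) (Fin n) ℂ)
    (K I : Fin n) (hIK : I < K) (s t : ℂ)
    (hs : stdWedge n ((Finset.Iio K \ {I})ᶜ \ {K}) *
        stdWedge n (((Finset.Iio K \ {I})ᶜ \ {K})ᶜ) = s • stdWedge n Finset.univ)
    (ht : derivWedge n V (Finset.Ici K) *
        stdWedge n (((Finset.Iio K \ {I})ᶜ \ {K})ᶜ) = t • stdWedge n Finset.univ) :
    s * t = V I K := by
  classical
  have hn : 0 < n := K.pos
  have hβ : (Finset.Iio K \ {I})ᶜ \ {K} = insert I (Finset.Ioi K) := by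
    ext x
    simp only [Finset.mem_sdiff, Finset.mem_compl, Finset.mem_Iio, Finset.mem_singleton,
      Finset.mem_insert, Finset.mem_Ioi, Fin.lt_def, Fin.ext_iff, not_and, not_lt, not_not]
    omega
  rw [hβ] at hs ht
  set B : Finset (Fin n) := insert I (Finset.Ioi K) with hBdef
  set lIoi : List (Fin n) := (Finset.Ioi K).sort (· ≤ ·) with hlIoi
  set lC : List (Fin n) := Bᶜ.sort (· ≤ ·) with hlC
  have hKC : K ∈ Bᶜ := by
    simp only [hBdef, Finset.mem_compl, Finset.mem_insert, Finset.mem_Ioi]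
    push_neg
    exact ⟨Fin.ne_of_gt hIK, le_refl K⟩
  have hsortB : B.sort (· ≤ ·) = I :: lIoi := by
    apply Finset.sort_insert
    · exact fun b hb => le_of_lt (lt_trans hIK (Finset.mem_Ioi.mp hb))
    · simp only [Finset.mem_Ioi]
      exact fun h => absurd (lt_trans hIK h) (lt_irrefl I)
  have hsortIci : (Finset.Ici K).sort (· ≤ ·) = K :: lIoi := by
    have hIci : Finset.Ici K = insert K (Finset.Ioi K) := by
      ext x
      simp only [Finset.mem_Ici, Finset.mem_insert, Finset.mem_Ioi, Fin.le_def, Fin.lt_def,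
        Fin.ext_iff]
      omega
    rw [hIci]
    apply Finset.sort_insert
    · exact fun b hb => le_of_lt (Finset.mem_Ioi.mp hb)
    · simp
  -- lengths
  have hlen1 : ((I :: lIoi) ++ lC).length = n := by
    rw [List.length_append, ← hsortB, Finset.length_sort, Finset.length_sort]
    simpa using Finset.card_add_card_compl B
  have hnum : lIoi.length + 1 + lC.length = n := by
    simpa [Nat.add_comm, Nat.add_left_comm, Nat.add_assoc] using hlen1
  -- the basic list of vectors
  set eS : Fin n → (Fin n → ℂ) := fun j => (Pi.single j (1:ℂ)) with heS
  set l₁ : List (Fin n) := (I :: lIoi) ++ lC with hl₁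
  set L₁ : List (Fin n → ℂ) := l₁.map eS with hL₁
  have hlenL₁ : L₁.length = n := by rw [hL₁, List.length_map]; exact hlen1
  set M₁ : Matrix (Fin n) (Fin n) ℂ := Matrix.of fun i j => L₁.get (Fin.cast hlenL₁.symm i) j
    with hM₁
  have hnodupl₁ : l₁.Nodup := by
    rw [hl₁, ← hsortB]
    refine List.Nodup.append (Finset.sort_nodup _ _) (Finset.sort_nodup _ _) ?_
    intro a ha hb
    rw [Finset.mem_sort] at ha hb
    exact absurd hb (by simpa using ha)
  -- `s` equals `D := det M₁`
  have Hs : M₁.det = s := by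
    have h0 := congrArg (coordMap n) hs
    rw [map_smul, smul_eq_mul, coordMap_univ, mul_one] at h0
    rw [← h0]
    rw [stdWedge, stdWedge, hsortB, ← List.prod_append, ← List.map_append]
    have hmm : ((I :: lIoi ++ lC).map fun j => ExteriorAlgebra.ι ℂ (Pi.single j (1:ℂ))) =
        L₁.map (ι ℂ) := by
      rw [hL₁, List.map_map]; rfl
    rw [hmm, coordMap_prod n L₁ hlenL₁]
  -- D * D = 1
  have hDD : M₁.det * M₁.det = 1 := by
    have hinj : Function.Injective (fun i : Fin n => l₁.get (Fin.cast hlen1.symm i)) := by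
      intro a b hab
      have := (List.nodup_iff_injective_get.mp hnodupl₁) hab
      exact Fin.cast_injective _ this
    have hMeq : M₁ = Matrix.of fun i j =>
        (Pi.single (l₁.get (Fin.cast hlen1.symm i)) (1:ℂ) : Fin n → ℂ) j := by
      ext i j
      rw [hM₁]
      simp only [Matrix.of_apply, List.get_eq_getElem]
      rw [List.getElem_of_eq hL₁, List.getElem_map]
      rfl
    rw [hMeq]
    exact det_single_sq _ hinj
  -- evaluate ht
  rw [derivWedge, hsortIci, Finset.sum_mul] at ht
  have Ht := congrArg (coordMap n) ht
  rw [map_sum, map_smul, smul_eq_mul, coordMap_univ, mul_one] at Ht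
  -- each term as a determinant
  set w : Fin n → Fin n → (Fin n → ℂ) := fun j m =>
    if m = j then V.mulVec (Pi.single j (1:ℂ)) else Pi.single m (1:ℂ) with hw
  set Lw : Fin n → List (Fin n → ℂ) := fun j => (K :: lIoi).map (w j) ++ lC.map eS with hLw
  have hlenLw : ∀ j, (Lw j).length = n := by
    intro j
    simp only [hLw, List.length_append, List.length_map, List.length_cons]
    omega
  have hterm : ∀ j, coordMap n
      (((K :: lIoi).map fun m => ExteriorAlgebra.ι ℂ
          (if m = j then V.mulVec (Pi.single j (1:ℂ)) else Pi.single m (1:ℂ))).prod *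
        stdWedge n Bᶜ) =
      (Matrix.of fun i c => (Lw j).get (Fin.cast (hlenLw j).symm i) c).det := by
    intro j
    rw [stdWedge, ← List.prod_append]
    have hmm : ((K :: lIoi).map fun m => ExteriorAlgebra.ι ℂ
          (if m = j then V.mulVec (Pi.single j (1:ℂ)) else Pi.single m (1:ℂ))) ++
        ((Bᶜ.sort (· ≤ ·)).map fun j' => ExteriorAlgebra.ι ℂ (Pi.single j' (1:ℂ))) =
        (Lw j).map (ι ℂ) := by
      rw [hLw, List.map_append, List.map_map, List.map_map]
      rfl
    rw [hmm, coordMap_prod n (Lw j) (hlenLw j)]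
  -- terms with j ∈ Ioi K vanish
  have hzero : ∀ j ∈ Finset.Ioi K, (Matrix.of fun i c =>
      (Lw j).get (Fin.cast (hlenLw j).symm i) c).det = 0 := by
    intro j hj
    have hKj : K ≠ j := Fin.ne_of_lt (Finset.mem_Ioi.mp hj)
    have hKlC : K ∈ lC := by rw [hlC, Finset.mem_sort]; exact hKC
    obtain ⟨q, hq, hqv⟩ := List.mem_iff_getElem.mp hKlC
    have hlen1' : (lIoi.length + 1) + q < n := by omega
    apply det_eq_zero_of_get_eq (Lw j) (hlenLw j) 0 ((lIoi.length + 1) + q) hn hlen1'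
      (by omega)
    have hLwj : Lw j = (K :: lIoi).map (w j) ++ lC.map eS := rfl
    have h0 : (Lw j)[0]'(by rw [hlenLw j]; exact hn) = Pi.single K (1:ℂ) := by
      rw [List.getElem_of_eq hLwj]
      rw [List.getElem_append_left (by simp)]
      simp [hw, hKj]
    have hq' : (Lw j)[(lIoi.length + 1) + q]'(by rw [hlenLw j]; exact hlen1') =
        Pi.single K (1:ℂ) := by
      rw [List.getElem_of_eq hLwj]
      rw [List.getElem_append_right (by simp)]
      simp only [List.length_map, List.length_cons, List.getElem_map]
      simp only [show lIoi.length + 1 + q - (lIoi.length + 1) = q from by omega]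
      rw [hqv]
    rw [h0, hq']
  -- the `j = K` term
  have hKterm : (Matrix.of fun i c => (Lw K).get (Fin.cast (hlenLw K).symm i) c).det =
      V I K * M₁.det := by
    -- identify the matrix as an updateRow of M₁
    have hLK : Lw K = V.mulVec (Pi.single K (1:ℂ)) :: (lIoi.map eS ++ lC.map eS) := by
      show List.map (w K) (K :: lIoi) ++ List.map eS lC =
        V.mulVec (Pi.single K (1:ℂ)) :: (lIoi.map eS ++ lC.map eS)
      rw [List.map_cons]
      have h1 : w K K = V.mulVec (Pi.single K (1:ℂ)) := by simp [hw]
      have h2 : lIoi.map (w K) = lIoi.map eS := by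
        apply List.map_congr_left
        intro m hm
        have : K < m := Finset.mem_Ioi.mp ((Finset.mem_sort _).mp hm)
        simp [hw, heS, Fin.ne_of_gt this]
      rw [h1, h2, List.cons_append]
    have hL₁' : L₁ = eS I :: (lIoi.map eS ++ lC.map eS) := by
      rw [hL₁, hl₁, List.cons_append, List.map_cons, List.map_append]
    have hMeq : (Matrix.of fun i c => (Lw K).get (Fin.cast (hlenLw K).symm i) c) =
        Matrix.updateRow M₁ ⟨0, hn⟩ (V.mulVec (Pi.single K (1:ℂ))) := by
      ext r c
      rw [Matrix.updateRow_apply]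
      by_cases hr : r = ⟨0, hn⟩
      · subst hr
        simp only [if_pos rfl, Matrix.of_apply, List.get_eq_getElem]
        rw [List.getElem_of_eq hLK]
        simp
      · have hrv : (r : ℕ) ≠ 0 := by simpa [Fin.ext_iff] using hr
        rw [if_neg hr]
        simp only [Matrix.of_apply, List.get_eq_getElem, hM₁]
        rw [List.getElem_of_eq hLK, List.getElem_of_eq hL₁']
        rw [List.getElem_cons, List.getElem_cons]
        simp only [Fin.coe_cast]
        rw [dif_neg hrv, dif_neg hrv]
    rw [hMeq]
    have hVcol : V.mulVec (Pi.single K (1:ℂ)) =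
        ∑ i, V i K • (Pi.single i (1:ℂ) : Fin n → ℂ) := by
      funext r
      simp only [Matrix.mulVec, dotProduct, Pi.single_apply, Finset.sum_apply,
        Pi.smul_apply, smul_eq_mul, mul_ite, mul_one, mul_zero]
      rw [Finset.sum_ite_eq' Finset.univ K (fun c => V r c), if_pos (Finset.mem_univ K)]
      rw [Finset.sum_ite_eq Finset.univ r (fun i => V i K), if_pos (Finset.mem_univ r)]
    rw [hVcol, det_updateRow_finsum]
    have hrow0 : M₁ ⟨0, hn⟩ = eS I := by
      funext c
      simp only [hM₁, Matrix.of_apply, List.get_eq_getElem]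
      rw [List.getElem_of_eq hL₁']
      simp
    rw [Finset.sum_eq_single I]
    · rw [Matrix.det_updateRow_smul]
      have : M₁.updateRow ⟨0, hn⟩ (Pi.single I (1:ℂ)) = M₁ := by
        conv_lhs => rw [show (Pi.single I (1:ℂ) : Fin n → ℂ) = M₁ ⟨0, hn⟩ from hrow0.symm]
        exact Matrix.updateRow_eq_self M₁ _
      rw [this]
    · intro i _ hiI
      rw [Matrix.det_updateRow_smul]
      have hmem : i ∈ l₁ := by
        rw [hl₁, ← hsortB, List.mem_append, Finset.mem_sort, Finset.mem_sort]
        by_cases h : i ∈ B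
        · exact Or.inl h
        · exact Or.inr (Finset.mem_compl.mpr h)
      obtain ⟨p, hp, hpv⟩ := List.mem_iff_getElem.mp hmem
      have hp' : p < n := by rwa [hlen1] at hp
      have hp0 : p ≠ 0 := by
        intro h0
        subst h0
        apply hiI
        rw [← hpv, List.getElem_of_eq hl₁]
        simp
      have hdup : (M₁.updateRow ⟨0, hn⟩ (Pi.single i (1:ℂ))).det = 0 := by
        apply Matrix.det_zero_of_row_eq (i := (⟨0, hn⟩ : Fin n)) (j := ⟨p, hp'⟩)
        · simp [Fin.ext_iff, Ne.symm hp0]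
        · rw [Matrix.updateRow_self, Matrix.updateRow_ne (by simp [Fin.ext_iff, hp0])]
          funext c
          rw [hM₁]
          simp only [Matrix.of_apply, List.get_eq_getElem, Fin.coe_cast]
          rw [List.getElem_of_eq hL₁, List.getElem_map, hpv]
      rw [hdup, mul_zero]
    · intro h
      exact absurd (Finset.mem_univ I) h
  -- sum over `Ici K`
  have hIci2 : Finset.Ici K = insert K (Finset.Ioi K) := by
    ext x
    simp only [Finset.mem_Ici, Finset.mem_insert, Finset.mem_Ioi, Fin.le_def, Fin.lt_def,
      Fin.ext_iff]
    omega
  have Ht2 : V I K * M₁.det = t := by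
    rw [← Ht]
    rw [hIci2, Finset.sum_insert (by simp)]
    rw [hterm K, hKterm]
    rw [Finset.sum_congr rfl (fun j hj => by rw [hterm j, hzero j hj]), Finset.sum_const_zero,
      add_zero]
  rw [← Hs, ← Ht2, mul_left_comm, hDD, mul_one]
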